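/- Suppose a family of probability measures (μ_t)_{t∈[0,1]} on ℤ satisfies μ_0 = δ_0, μ_1 = δ_n, and for all finitely supported f: ℤ → ℝ, d/dt ∑_k f(k)μ_t(k) = n ∑_k (∇f)(k)μ_t(k), where ∇ is given by coefficients (α_k) ∈ [0,1]. Then for every t ∈ [0,1], the support of μ_t is contained in {0,...,n}. -/

import Mathlib

open Finset

/-- The derivative on `ℤ` with mixing coefficients `α`. -/
noncomputable def nabla (α : ℤ → ℝ) (f : ℤ → ℝ) (k : ℤ) : ℝ :=
  α k * (f k - f (k - 1)) + (1 - α k) * (f (k + 1) - f k)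

lemma summable_of_finsupp {g : ℤ → ℝ} (h : (Function.support g).Finite) : Summable g :=
  summable_of_ne_finset_zero (s := h.toFinset)
    (fun b hb => by by_contra hgb; exact hb (h.mem_toFinset.mpr hgb))

lemma nabla_supp_finite {α f : ℤ → ℝ} (h : (Function.support f).Finite) :
    (Function.support (nabla α f)).Finite := by
  have hsub : Function.support (nabla α f) ⊆
      ((· + 1) '' Function.support f) ∪ (Function.support f ∪ ((· - 1) '' Function.support f)) := by
    intro j hj
    by_contra hmem
    simp only [Set.mem_union, Set.mem_image, Function.mem_support, not_or, not_exists, not_and] at hmem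
    obtain ⟨h1, h2, h3⟩ := hmem
    have e1 : f (j - 1) = 0 := by
      by_contra hne; exact (h1 (j - 1) hne) (by ring)
    have e3 : f (j + 1) = 0 := by
      by_contra hne; exact (h3 (j + 1) hne) (by ring)
    have e2 : f j = 0 := by simpa using h2
    have : nabla α f j = 0 := by simp [nabla, e1, e2, e3]
    exact hj this
  exact Set.Finite.subset ((h.image _).union (h.union (h.image _))) hsub

lemma nabla_neg (α f : ℤ → ℝ) (k : ℤ) : nabla α (-f) k = -nabla α f k := by
  simp [nabla]; ring

/-- A step inequality for the clamped min of affine functions. -/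
lemma clamp_step {a b c d s : ℝ} (hs : 0 ≤ s) (h2 : a ≤ c + s) (h1 : b ≤ d + s) :
    max 0 (min (min 1 a) b) ≤ max 0 (min (min 1 c) d) + s := by
  rcases le_total (min (min 1 a) b) 0 with h | h
  · calc max 0 (min (min 1 a) b) = 0 := max_eq_left h
    _ ≤ max 0 (min (min 1 c) d) + s := by positivity
  · rw [max_eq_right h]
    have : min (min 1 a) b ≤ min (min 1 c) d + s := by
      rcases le_total (min 1 c) d with hcd | hcd <;> rcases le_total 1 a with h1a | h1a <;>
        rcases le_total 1 c with h1c | h1c <;>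
        simp [min_def] <;> split_ifs <;> linarith [min_le_left (min 1 a) b, min_le_right (min 1 a) b,
          min_le_left (1:ℝ) a, min_le_right (1:ℝ) a]
    exact this.trans (add_le_add_left (le_max_right 0 _) s)

/-- Pointwise bound on nabla from bounds on both discrete differences. -/
lemma nabla_le {α f : ℤ → ℝ} {s : ℝ} (hα : ∀ k, α k ∈ Set.Icc (0:ℝ) 1)
    (hb : ∀ j, f j - f (j - 1) ≤ s) (hf : ∀ j, f (j + 1) - f j ≤ s) (k : ℤ) :
    nabla α f k ≤ s := by
  obtain ⟨h0, h1⟩ := hα k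
  unfold nabla
  nlinarith [hb k, hf k]

lemma tsum_delta (g : ℤ → ℝ) (m : ℤ) : ∑' j : ℤ, g j * (if j = m then 1 else 0) = g m := by
  rw [tsum_congr (fun j => show g j * (if j = m then 1 else 0) = if j = m then g m else 0 by
    split_ifs with h <;> simp [h])]
  exact tsum_ite_eq m (fun _ => g m)

lemma summable_mul_of_finsupp {f g : ℤ → ℝ} (h : (Function.support f).Finite) :
    Summable (fun k => f k * g k) :=
  summable_of_finsupp (h.subset fun j hj => by
    simp only [Function.mem_support] at hj ⊢
    intro h0; exact hj (by rw [h0, zero_mul]))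

/-- Core monotonicity lemma. -/
lemma core (n : ℕ) (α : ℤ → ℝ) (μ : ℝ → ℤ → ℝ)
    (hprob : ∀ t ∈ Set.Icc (0:ℝ) 1, (∀ k, 0 ≤ μ t k) ∧ HasSum (μ t) 1)
    (heq : ∀ f : ℤ → ℝ, (Function.support f).Finite → ∀ t ∈ Set.Icc (0:ℝ) 1,
      HasDerivWithinAt (fun s => ∑' k : ℤ, f k * μ s k)
        ((n : ℝ) * ∑' k : ℤ, nabla α f k * μ t k) (Set.Icc 0 1) t)
    (f : ℤ → ℝ) (hfin : (Function.support f).Finite) (s : ℝ)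
    (hnab : ∀ j, nabla α f j ≤ s) :
    MonotoneOn (fun t => (n : ℝ) * s * t - ∑' k : ℤ, f k * μ t k) (Set.Icc (0:ℝ) 1) := by
  have key : ∀ t ∈ Set.Icc (0:ℝ) 1, HasDerivWithinAt
      (fun u => (n:ℝ) * s * u - ∑' k : ℤ, f k * μ u k)
      ((n:ℝ) * s - (n:ℝ) * ∑' k : ℤ, nabla α f k * μ t k) (Set.Icc 0 1) t := by
    intro t ht
    have h1 := ((hasDerivWithinAt_id t (Set.Icc (0:ℝ) 1)).const_mul ((n:ℝ) * s)).sub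
      (heq f hfin t ht)
    simp at h1; exact h1
  apply monotoneOn_of_hasDerivWithinAt_nonneg (convex_Icc 0 1)
    (f' := fun t => (n:ℝ) * s - (n:ℝ) * ∑' k : ℤ, nabla α f k * μ t k)
  · intro t ht; exact (key t ht).continuousWithinAt
  · intro t ht
    rw [interior_Icc] at ht ⊢
    exact (key t (Set.Ioo_subset_Icc_self ht)).mono Set.Ioo_subset_Icc_self
  · intro t ht
    rw [interior_Icc] at ht
    obtain ⟨hpos, hsum⟩ := hprob t (Set.Ioo_subset_Icc_self ht)
    have hsl : Summable (fun k : ℤ => nabla α f k * μ t k) :=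
      summable_mul_of_finsupp (nabla_supp_finite hfin)
    have hsr : Summable (fun k : ℤ => s * μ t k) := hsum.summable.mul_left s
    have h2 : ∑' k : ℤ, nabla α f k * μ t k ≤ ∑' k : ℤ, s * μ t k :=
      Summable.tsum_le_tsum (fun k => mul_le_mul_of_nonneg_right (hnab k) (hpos k)) hsl hsr
    have h3 : ∑' k : ℤ, s * μ t k = s := by rw [tsum_mul_left, hsum.tsum_eq, mul_one]
    have h4 : ∑' k : ℤ, nabla α f k * μ t k ≤ s := h3 ▸ h2
    have hn0 : (0:ℝ) ≤ n := Nat.cast_nonneg n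
    nlinarith

lemma le_zero_of_forall_le_div {c x : ℝ} (hc : 0 ≤ c) (h : ∀ M : ℕ, x ≤ c / (M + 1)) :
    x ≤ 0 := by
  by_contra hx
  push_neg at hx
  obtain ⟨M, hM⟩ := exists_nat_gt (c / x)
  have hM1 : (0:ℝ) < (M:ℝ) + 1 := by positivity
  have h2 : c < x * (M + 1) := by
    have h1 : c / x < (M:ℝ) + 1 := hM.trans (by linarith)
    rw [div_lt_iff₀ hx] at h1
    linarith [mul_comm ((M:ℝ) + 1) x]
  have h3 : c / ((M:ℝ) + 1) < x := (div_lt_iff₀ hM1).mpr (by linarith)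
  linarith [h M]

/-- Left test function. -/
noncomputable def fL (k : ℤ) (M : ℕ) (j : ℤ) : ℝ :=
  max 0 (min (min 1 (((j:ℝ) - k + M + 1) / (M + 1))) (-(j:ℝ)))

/-- Right test function. -/
noncomputable def fR (n k : ℤ) (M : ℕ) (j : ℤ) : ℝ :=
  max 0 (min (min 1 (((k:ℝ) - j + M + 1) / (M + 1))) ((j:ℝ) - n))

lemma fL_nonneg (k : ℤ) (M : ℕ) (j : ℤ) : 0 ≤ fL k M j := le_max_left _ _
lemma fR_nonneg (n k : ℤ) (M : ℕ) (j : ℤ) : 0 ≤ fR n k M j := le_max_left _ _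

lemma fL_supp (k : ℤ) (M : ℕ) : (Function.support (fL k M)).Finite := by
  apply Set.Finite.subset (Set.finite_Icc (k - M - 1) 0)
  intro j hj
  simp only [Function.mem_support] at hj
  by_contra hjmem
  apply hj
  simp only [Set.mem_Icc, not_and_or, not_le] at hjmem
  have hM1 : (0:ℝ) < (M:ℝ) + 1 := by positivity
  rcases hjmem with h | h
  · have hnum : ((j:ℝ) - k + M + 1) < 0 := by
      have : (j:ℝ) < (k:ℝ) - (M:ℝ) - 1 := by exact_mod_cast h
      linarith
    have hr : ((j:ℝ) - k + M + 1) / (M + 1) < 0 := div_neg_of_neg_of_pos hnum hM1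
    apply max_eq_left
    calc min (min 1 (((j:ℝ) - k + M + 1) / (M + 1))) (-(j:ℝ))
        ≤ min 1 (((j:ℝ) - k + M + 1) / (M + 1)) := min_le_left _ _
      _ ≤ ((j:ℝ) - k + M + 1) / (M + 1) := min_le_right _ _
      _ ≤ 0 := le_of_lt hr
  · have hl : -(j:ℝ) < 0 := by
      have : (0:ℝ) < (j:ℝ) := by exact_mod_cast h
      linarith
    exact max_eq_left ((min_le_right _ _).trans (le_of_lt hl))

lemma fR_supp (n k : ℤ) (M : ℕ) : (Function.support (fR n k M)).Finite := by
  apply Set.Finite.subset (Set.finite_Icc n (k + M + 1))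
  intro j hj
  simp only [Function.mem_support] at hj
  by_contra hjmem
  apply hj
  simp only [Set.mem_Icc, not_and_or, not_le] at hjmem
  have hM1 : (0:ℝ) < (M:ℝ) + 1 := by positivity
  rcases hjmem with h | h
  · have hl : (j:ℝ) - n < 0 := by
      have : (j:ℝ) < (n:ℝ) := by exact_mod_cast h
      linarith
    exact max_eq_left ((min_le_right _ _).trans (le_of_lt hl))
  · have hnum : ((k:ℝ) - j + M + 1) < 0 := by
      have : (k:ℝ) + (M:ℝ) + 1 < (j:ℝ) := by exact_mod_cast h
      linarith
    have hr : ((k:ℝ) - j + M + 1) / (M + 1) < 0 := div_neg_of_neg_of_pos hnum hM1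
    apply max_eq_left
    calc min (min 1 (((k:ℝ) - j + M + 1) / (M + 1))) ((j:ℝ) - n)
        ≤ min 1 (((k:ℝ) - j + M + 1) / (M + 1)) := min_le_left _ _
      _ ≤ ((k:ℝ) - j + M + 1) / (M + 1) := min_le_right _ _
      _ ≤ 0 := le_of_lt hr

lemma fL_at_k {k : ℤ} (hk : k < 0) (M : ℕ) : fL k M k = 1 := by
  have hM1 : (0:ℝ) < (M:ℝ) + 1 := by positivity
  have hr : ((k:ℝ) - k + M + 1) / (M + 1) = 1 := by
    rw [show ((k:ℝ) - k + M + 1) = (M:ℝ) + 1 by ring]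
    exact div_self (ne_of_gt hM1)
  have hk1 : (1:ℝ) ≤ -(k:ℝ) := by
    have hk' : k ≤ -1 := by omega
    have : (k:ℝ) ≤ -1 := by exact_mod_cast hk'
    linarith
  unfold fL
  rw [hr, min_self, min_eq_left hk1, max_eq_right zero_le_one]

lemma fL_at_zero (k : ℤ) (M : ℕ) : fL k M 0 = 0 := by
  unfold fL
  apply max_eq_left
  simpa using (min_le_right (min 1 (((0:ℝ) - k + M + 1) / (M + 1))) (-(0:ℝ))).trans (by norm_num)

lemma fR_at_k {n k : ℤ} (hk : n < k) (M : ℕ) : fR n k M k = 1 := by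
  have hM1 : (0:ℝ) < (M:ℝ) + 1 := by positivity
  have hr : ((k:ℝ) - k + M + 1) / (M + 1) = 1 := by
    rw [show ((k:ℝ) - k + M + 1) = (M:ℝ) + 1 by ring]
    exact div_self (ne_of_gt hM1)
  have hk1 : (1:ℝ) ≤ (k:ℝ) - n := by
    have : (n:ℝ) + 1 ≤ (k:ℝ) := by exact_mod_cast hk
    linarith
  unfold fR
  rw [hr, min_self, min_eq_left hk1, max_eq_right zero_le_one]

lemma fR_at_n (n k : ℤ) (M : ℕ) : fR n k M n = 0 := by
  unfold fR
  apply max_eq_left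
  simpa using (min_le_right (min 1 (((k:ℝ) - n + M + 1) / (M + 1))) ((n:ℝ) - n)).trans (by norm_num)

lemma fL_step (k : ℤ) (M : ℕ) (j : ℤ) : fL k M (j + 1) ≤ fL k M j + 1 / (M + 1) := by
  have hM1 : (0:ℝ) < (M:ℝ) + 1 := by positivity
  have hs0 : (0:ℝ) ≤ 1 / (M + 1) := by positivity
  unfold fL
  apply clamp_step hs0
  · exact le_of_eq (by push_cast; ring)
  · push_cast
    linarith

lemma fR_step (n k : ℤ) (M : ℕ) (j : ℤ) : fR n k M j ≤ fR n k M (j + 1) + 1 / (M + 1) := by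
  have hs0 : (0:ℝ) ≤ 1 / (M + 1) := by positivity
  unfold fR
  apply clamp_step hs0
  · exact le_of_eq (by push_cast; ring)
  · push_cast
    linarith

lemma fL_nabla {α : ℤ → ℝ} (hα : ∀ k, α k ∈ Set.Icc (0:ℝ) 1) (k : ℤ) (M : ℕ) (j : ℤ) :
    nabla α (fL k M) j ≤ 1 / (M + 1) := by
  apply nabla_le hα
  · intro i
    have h := fL_step k M (i - 1)
    rw [sub_add_cancel] at h
    linarith
  · intro i
    linarith [fL_step k M i]

lemma fR_nabla {α : ℤ → ℝ} (hα : ∀ k, α k ∈ Set.Icc (0:ℝ) 1) (n k : ℤ) (M : ℕ) (j : ℤ) :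
    nabla α (fun i => -(fR n k M i)) j ≤ 1 / (M + 1) := by
  apply nabla_le hα
  · intro i
    have h := fR_step n k M (i - 1)
    rw [sub_add_cancel] at h
    linarith
  · intro i
    linarith [fR_step n k M i]

theorem stmt3 (n : ℕ) (hn : 1 ≤ n) (α : ℤ → ℝ) (hα : ∀ k, α k ∈ Set.Icc (0 : ℝ) 1)
    (μ : ℝ → ℤ → ℝ)
    (hprob : ∀ t ∈ Set.Icc (0 : ℝ) 1, (∀ k, 0 ≤ μ t k) ∧ HasSum (μ t) 1)
    (h0 : ∀ k, μ 0 k = if k = 0 then 1 else 0)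
    (h1 : ∀ k, μ 1 k = if k = (n : ℤ) then 1 else 0)
    (heq : ∀ f : ℤ → ℝ, (Function.support f).Finite → ∀ t ∈ Set.Icc (0 : ℝ) 1,
      HasDerivWithinAt (fun s => ∑' k : ℤ, f k * μ s k)
        ((n : ℝ) * ∑' k : ℤ, nabla α f k * μ t k) (Set.Icc 0 1) t) :
    ∀ t ∈ Set.Icc (0 : ℝ) 1, ∀ k : ℤ, k < 0 ∨ (n : ℤ) < k → μ t k = 0 := by
  intro t ht k hk
  have hpos := (hprob t ht).1
  have hn0 : (0:ℝ) ≤ (n:ℝ) := Nat.cast_nonneg n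
  have h0mem : (0:ℝ) ∈ Set.Icc (0:ℝ) 1 := by constructor <;> norm_num
  have h1mem : (1:ℝ) ∈ Set.Icc (0:ℝ) 1 := by constructor <;> norm_num
  refine le_antisymm ?_ (hpos k)
  rcases hk with hk | hk
  · -- case k < 0
    apply le_zero_of_forall_le_div hn0
    intro M
    have hfin := fL_supp k M
    have hmono := core n α μ hprob heq (fL k M) hfin (1/(M+1)) (fL_nabla hα k M)
    have hineq := hmono h0mem ht ht.1
    have hG0 : ∑' j : ℤ, fL k M j * μ 0 j = 0 := by
      rw [tsum_congr (fun j => by rw [h0 j]), tsum_delta (fL k M) 0, fL_at_zero]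
    have hGt_ge : μ t k ≤ ∑' j : ℤ, fL k M j * μ t j := by
      have hsm : Summable (fun j : ℤ => fL k M j * μ t j) := summable_mul_of_finsupp hfin
      have h := Summable.le_tsum hsm k (fun j _ => mul_nonneg (fL_nonneg k M j) (hpos j))
      rwa [fL_at_k hk M, one_mul] at h
    have hineq2 : (0:ℝ) ≤ (n:ℝ) * (1/(M+1)) * t - ∑' j : ℤ, fL k M j * μ t j := by
      simpa [hG0] using hineq
    have ht1 : t ≤ 1 := ht.2
    have hns : (0:ℝ) ≤ (n:ℝ) * (1/(M+1)) := by positivity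
    have heqn : (n:ℝ) * (1/(M+1)) = (n:ℝ) / (M+1) := by ring
    nlinarith [hineq2, hGt_ge]
  · -- case n < k
    apply le_zero_of_forall_le_div hn0
    intro M
    have hfin : (Function.support fun i => -(fR n k M i)).Finite := by
      apply Set.Finite.subset (fR_supp n k M)
      intro j hj
      simp only [Function.mem_support, neg_ne_zero] at hj
      exact hj
    have hmono := core n α μ hprob heq _ hfin (1/(M+1)) (fR_nabla hα n k M)
    have hineq := hmono ht h1mem ht.2
    have hneg : ∀ u : ℝ, ∑' j : ℤ, (fun i => -(fR n k M i)) j * μ u j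
        = -∑' j : ℤ, fR n k M j * μ u j := by
      intro u
      rw [← tsum_neg]
      exact tsum_congr (fun j => by ring)
    have hG1 : ∑' j : ℤ, fR n k M j * μ 1 j = 0 := by
      rw [tsum_congr (fun j => by rw [h1 j]), tsum_delta (fR n k M) (n:ℤ), fR_at_n]
    have hGt_ge : μ t k ≤ ∑' j : ℤ, fR n k M j * μ t j := by
      have hsm : Summable (fun j : ℤ => fR n k M j * μ t j) :=
        summable_mul_of_finsupp (fR_supp n k M)
      have h := Summable.le_tsum hsm k (fun j _ => mul_nonneg (fR_nonneg n k M j) (hpos j))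
      rwa [fR_at_k hk M, one_mul] at h
    have hineq2 : (n:ℝ) * (1/(M+1)) * t + ∑' j : ℤ, fR n k M j * μ t j
        ≤ (n:ℝ) * (1/(M+1)) * 1 + 0 := by
      have h := hineq
      simp only [hneg t, hneg 1, hG1, sub_neg_eq_add, neg_zero, add_zero] at h
      linarith
    have ht0 : 0 ≤ t := ht.1
    have hns : (0:ℝ) ≤ (n:ℝ) * (1/(M+1)) := by positivity
    have heqn : (n:ℝ) * (1/(M+1)) = (n:ℝ) / (M+1) := by ring
    nlinarith [hineq2, hGt_ge]
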